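/- Every rational integer prime p, viewed as an element of the quaternions, is not irreducible in the ring of Hurwitz integers; i.e., p factors into quaternion primes. -/

import Mathlib

/-- A Lipschitz integer: a quaternion with all coordinates in ℤ. -/
def IsLipschitzInt (x : Quaternion ℚ) : Prop :=
  ∃ a b c d : ℤ, x = ⟨(a : ℚ), (b : ℚ), (c : ℚ), (d : ℚ)⟩

/-- A half-integer Hurwitz integer: all coordinates in ℤ + 1/2. -/
def IsHalfInt (x : Quaternion ℚ) : Prop :=
  ∃ a b c d : ℤ, x = ⟨(a : ℚ) + 1/2, (b : ℚ) + 1/2, (c : ℚ) + 1/2, (d : ℚ) + 1/2⟩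

/-- A Hurwitz integer. -/
def IsHurwitzInt (x : Quaternion ℚ) : Prop := IsLipschitzInt x ∨ IsHalfInt x

/-- Every rational prime, viewed inside the quaternions, factors into two
Hurwitz integers, neither of which is a unit (i.e. neither has norm 1): it is
not irreducible in the ring of Hurwitz integers. -/
theorem rational_prime_not_irreducible_in_hurwitz (p : ℕ) (hp : p.Prime) :
    ∃ x y : Quaternion ℚ, IsHurwitzInt x ∧ IsHurwitzInt y ∧
      Quaternion.normSq x ≠ 1 ∧ Quaternion.normSq y ≠ 1 ∧
      x * y = (p : Quaternion ℚ) := by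

  obtain ⟨a, b, c, d, h⟩ := Nat.sum_four_squares p
  set x : Quaternion ℚ := ⟨(a:ℚ), b, c, d⟩ with hx
  have hnorm : Quaternion.normSq x = p := by
    simp [Quaternion.normSq_def', hx, ← h]
    exact Quaternion.normSq_def' _
  have hnormy : Quaternion.normSq (star x) = p := by
    rw [Quaternion.normSq_star, hnorm]
  refine ⟨x, star x, Or.inl ⟨a, b, c, d, by push_cast; rfl⟩,
    Or.inl ⟨a, -b, -c, -d, by rw [hx]; ext <;> simp <;> [exact Quaternion.re_star _; exact Quaternion.imI_star _;
      exact Quaternion.imJ_star _; exact Quaternion.imK_star _]⟩, ?_, ?_, ?_⟩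
  · rw [hnorm]; exact_mod_cast hp.ne_one
  · rw [hnormy]; exact_mod_cast hp.ne_one
  · rw [Quaternion.self_mul_star, hnorm]; norm_cast
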